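/- arXiv:2404.16016 — 6 statements merged into one kernel-verified Lean document; each statement's English description precedes it below -/
import Mathlib

section
/- For every positive rational number x, there exists a finite set A of distinct positive integers such that the sum of the reciprocals of the elements of A equals x. -/
/-- Greedy (Fibonacci–Sylvester) step lemma: any nonnegative rational less than
`1/N` is a sum of distinct unit fractions with denominators greater than `N`. -/
lemma egyptian_aux (k : ℕ) : ∀ x : ℚ, x.num.toNat ≤ k → 0 ≤ x → ∀ N : ℕ, 0 < N →
    x < 1 / N → ∃ A : Finset ℕ, (∀ a ∈ A, N < a) ∧ ∑ a ∈ A, (1 : ℚ) / a = x := by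
  induction k with
  | zero =>
    intro x hk hx N _ _
    have hnum : x.num = 0 := by
      have h0 : 0 ≤ x.num := Rat.num_nonneg.mpr hx
      omega
    have hx0 : x = 0 := Rat.num_eq_zero.mp hnum
    exact ⟨∅, by simp, by simp [hx0]⟩
  | succ k ih =>
    intro x hk hx N hN hxN
    rcases eq_or_lt_of_le hx with h0 | h0
    · exact ⟨∅, by simp, by simp [← h0]⟩
    set m : ℕ := ⌈x⁻¹⌉₊ with hm_def
    have hxinv_pos : (0 : ℚ) < x⁻¹ := by positivity
    have hNpos : (0:ℚ) < N := by exact_mod_cast hN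
    have hmN : N < m := by
      rw [hm_def, Nat.lt_ceil]
      rw [lt_div_iff₀ hNpos] at hxN
      by_contra hcon
      push_neg at hcon
      nlinarith [mul_le_mul_of_nonneg_left hcon (le_of_lt h0),
        mul_inv_cancel₀ (ne_of_gt h0)]
    have hm1 : 1 ≤ m := le_trans hN (le_of_lt hmN)
    have hm2 : 2 ≤ m := by omega
    have hmpos : (0 : ℚ) < m := by exact_mod_cast Nat.lt_of_lt_of_le Nat.zero_lt_one hm1
    have hm_ge : (x⁻¹ : ℚ) ≤ m := Nat.le_ceil _
    have hmx : 1 / (m : ℚ) ≤ x := by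
      rw [div_le_iff₀ hmpos]
      nlinarith [mul_le_mul_of_nonneg_left hm_ge (le_of_lt h0),
        mul_inv_cancel₀ (ne_of_gt h0)]
    have hm_lt : ((m : ℚ) - 1) < x⁻¹ := by
      have := Nat.ceil_lt_add_one (le_of_lt hxinv_pos) (R := ℚ)
      rw [← hm_def] at this
      linarith
    have hx_lt : x < 1 / ((m : ℚ) - 1) := by
      have hm1q : (0 : ℚ) < (m : ℚ) - 1 := by
        have : (2 : ℚ) ≤ m := by exact_mod_cast hm2
        linarith
      rw [lt_div_iff₀ hm1q]
      nlinarith [mul_lt_mul_of_pos_left hm_lt h0,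
        mul_inv_cancel₀ (ne_of_gt h0)]
    set y : ℚ := x - 1 / m with hy_def
    have hy0 : 0 ≤ y := by rw [hy_def]; linarith
    have hylt : y < 1 / m := by
      have hm1q : (0 : ℚ) < (m : ℚ) - 1 := by
        have : (2 : ℚ) ≤ m := by exact_mod_cast hm2
        linarith
      have h1 : x < 1 / ((m : ℚ) - 1) := hx_lt
      have h2 : 1 / ((m : ℚ) - 1) - 1 / m ≤ 1 / m := by
        rw [div_sub_div _ _ (ne_of_gt hm1q) (ne_of_gt hmpos)]
        have h2m : (2 : ℚ) ≤ m := by exact_mod_cast hm2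
        have : ((m : ℚ) - 1) * m ≥ m := by nlinarith
        rw [div_le_div_iff₀ (by positivity) hmpos]
        ring_nf
        nlinarith
      calc y = x - 1 / m := rfl
        _ < 1 / ((m : ℚ) - 1) - 1 / m := by linarith
        _ ≤ 1 / m := h2
    -- numerator decreases
    have hq : (0 : ℚ) < (x.den : ℚ) := by exact_mod_cast x.pos
    have hxq : x * (x.den : ℚ) = (x.num : ℚ) := by
      exact_mod_cast Rat.mul_den_eq_num x
    have hmne : (m : ℚ) ≠ 0 := ne_of_gt hmpos
    have hqne : (x.den : ℚ) ≠ 0 := ne_of_gt hq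
    have hne : ((x.den * m : ℤ) : ℚ) ≠ 0 := by push_cast; positivity
    have hy_eq : y = ((x.num * m - x.den : ℤ) : ℚ) / ((x.den * m : ℤ) : ℚ) := by
      have hmm : (m : ℚ) * (m : ℚ)⁻¹ = 1 := mul_inv_cancel₀ hmne
      rw [hy_def, eq_div_iff hne]
      push_cast
      rw [one_div]
      linear_combination (m:ℚ) * hxq - (x.den:ℚ) * hmm
    have hden_dvd : ((y.den : ℤ)) ∣ (x.den * m : ℤ) := by
      rw [hy_eq, ← Rat.divInt_eq_div]; exact Rat.den_dvd _ _
    have hdm_pos : (0 : ℤ) < (x.den * m : ℤ) := by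
      have := x.pos
      positivity
    have hden_le : ((y.den : ℤ)) ≤ (x.den * m : ℤ) := Int.le_of_dvd hdm_pos hden_dvd
    have hynum_eq : (y.num : ℚ) = y * (y.den : ℚ) := by
      exact_mod_cast (Rat.mul_den_eq_num y).symm
    have hyq : y * ((x.den : ℚ) * m) = (x.num : ℚ) * m - x.den := by
      have : ((x.den : ℚ) * m) ≠ 0 := by positivity
      rw [hy_eq]
      push_cast
      exact div_mul_cancel₀ _ this
    have hnum_lt : y.num < x.num := by
      have hpm : (x.num : ℚ) * m - x.den < x.num := by
        have hm1q : (0 : ℚ) < (m : ℚ) - 1 := by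
          have : (2 : ℚ) ≤ m := by exact_mod_cast hm2
          linarith
        have hxn_pos : (0 : ℚ) < (x.num : ℚ) := by
          exact_mod_cast Rat.num_pos.mpr h0
        -- x < 1/(m-1) means x.num * (m-1) < x.den
        have : (x.num : ℚ) * ((m : ℚ) - 1) < x.den := by
          have := hx_lt
          rw [lt_div_iff₀ hm1q] at this
          calc (x.num : ℚ) * ((m : ℚ) - 1) = (x * x.den) * ((m:ℚ) - 1) := by rw [hxq]
            _ = (x * ((m:ℚ)-1)) * x.den := by ring
            _ < 1 * x.den := by
                apply mul_lt_mul_of_pos_right this hq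
            _ = x.den := by ring
        linarith
      have hq' : (y.num : ℚ) ≤ (x.num : ℚ) * m - x.den := by
        rw [hynum_eq]
        calc y * (y.den : ℚ) ≤ y * ((x.den : ℚ) * m) := by
              apply mul_le_mul_of_nonneg_left _ hy0
              exact_mod_cast hden_le
          _ = (x.num : ℚ) * m - x.den := hyq
      have : (y.num : ℚ) < (x.num : ℚ) := lt_of_le_of_lt hq' hpm
      exact_mod_cast this
    have hy_num_nonneg : 0 ≤ y.num := Rat.num_nonneg.mpr hy0
    have hx_num_pos : 0 < x.num := Rat.num_pos.mpr h0
    have hk' : y.num.toNat ≤ k := by omega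
    obtain ⟨A', hA'gt, hA'sum⟩ := ih y hk' hy0 m (by omega) hylt
    have hmnot : m ∉ A' := fun h => lt_irrefl m (hA'gt m h)
    refine ⟨insert m A', ?_, ?_⟩
    · intro a ha
      rcases Finset.mem_insert.mp ha with rfl | ha
      · exact hmN
      · exact lt_trans hmN (hA'gt a ha)
    · rw [Finset.sum_insert hmnot, hA'sum, hy_def]
      ring

/-- Every positive rational admits an Egyptian fraction representation:
a finite set of distinct positive integers whose reciprocals sum to it. -/
theorem egyptian_fraction_exists (x : ℚ) (hx : 0 < x) :
    ∃ A : Finset ℕ, (∀ a ∈ A, 0 < a) ∧ ∑ a ∈ A, (1 : ℚ) / a = x := by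
  -- harmonic numbers are unbounded
  have hexists : ∃ n : ℕ, x < harmonic n := by
    obtain ⟨n, hn⟩ := exists_nat_gt (Real.exp x)
    refine ⟨n, ?_⟩
    have h1 : Real.log ((n : ℝ) + 1) ≤ (harmonic n : ℝ) := by
      have := log_add_one_le_harmonic n
      push_cast at this
      exact this
    have h2 : (x : ℝ) < Real.log (n + 1) := by
      have hn' : Real.exp x < n + 1 := by
        have : (0:ℝ) ≤ n := Nat.cast_nonneg n
        linarith
      calc (x : ℝ) = Real.log (Real.exp x) := (Real.log_exp _).symm
        _ < Real.log (n + 1) := Real.log_lt_log (Real.exp_pos _) hn'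
    have : (x : ℝ) < (harmonic n : ℝ) := lt_of_lt_of_le h2 h1
    exact_mod_cast this
  classical
  set n := Nat.find hexists with hn_def
  have hn : x < harmonic n := Nat.find_spec hexists
  have hn_pos : 0 < n := by
    rcases Nat.eq_zero_or_pos n with h | h
    · exfalso; rw [h] at hn; simp [harmonic_zero] at hn; linarith
    · exact h
  have hn_min : ¬ x < harmonic (n - 1) := Nat.find_min hexists (by omega)
  push_neg at hn_min
  set y : ℚ := x - harmonic (n - 1) with hy_def
  have hy0 : 0 ≤ y := by simp [hy_def]; linarith
  have hsucc : harmonic n = harmonic (n - 1) + (n : ℚ)⁻¹ := by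
    have : n - 1 + 1 = n := by omega
    rw [← this, harmonic_succ]
    norm_num [this]
  have hylt : y < 1 / n := by
    rw [hy_def, one_div]
    rw [hsucc] at hn
    linarith
  obtain ⟨A', hA'gt, hA'sum⟩ := egyptian_aux y.num.toNat y le_rfl hy0 n hn_pos hylt
  refine ⟨A' ∪ Finset.Icc 1 (n - 1), ?_, ?_⟩
  · intro a ha
    rcases Finset.mem_union.mp ha with h | h
    · exact lt_trans hn_pos (hA'gt a h)
    · exact (Finset.mem_Icc.mp h).1
  · have hdisj : Disjoint A' (Finset.Icc 1 (n - 1)) := by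
      rw [Finset.disjoint_left]
      intro a ha hb
      have h1 := hA'gt a ha
      have h2 := (Finset.mem_Icc.mp hb).2
      omega
    rw [Finset.sum_union hdisj, hA'sum]
    have hIcc : ∑ a ∈ Finset.Icc 1 (n - 1), (1 : ℚ) / a = harmonic (n - 1) := by
      rw [harmonic_eq_sum_Icc]
      exact Finset.sum_congr rfl (fun i _ => one_div _)
    rw [hIcc, hy_def]
    ring
end

section
/- Let S be a finite set of positive real numbers and x ≥ 0. Then the number of subsets A ⊆ S with ∑_{s∈A} s ≤ x is at most 2^h, where h is the supremum of ∑_{s∈S} H(p_s) over all families (p_s)_{s∈S} with p_s ∈ [0,1] and ∑_{s∈S} s·p_s ≤ x, and H(p) = -p·log₂ p - (1-p)·log₂(1-p) (with H(0)=H(1)=0). -/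
/-- Binary entropy function (base 2), with `H 0 = H 1 = 0` by the
convention `Real.logb 2 0 = 0`. -/
noncomputable def binEnt (p : ℝ) : ℝ :=
  -p * Real.logb 2 p - (1 - p) * Real.logb 2 (1 - p)

lemma binEnt_eq_div (p : ℝ) : binEnt p = Real.binEntropy p / Real.log 2 := by
  simp [binEnt, Real.binEntropy, Real.logb, Real.log_inv]
  ring

@[simp] lemma binEnt_zero : binEnt 0 = 0 := by simp [binEnt]

@[simp] lemma binEnt_one : binEnt 1 = 0 := by simp [binEnt]

lemma binEnt_le_one (p : ℝ) : binEnt p ≤ 1 := by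
  rw [binEnt_eq_div]
  have h : Real.log 2 > 0 := Real.log_pos one_lt_two
  rw [div_le_one h]
  exact Real.binEntropy_le_log_two

lemma binEnt_concave {p q l : ℝ} (hp : p ∈ Set.Icc (0:ℝ) 1) (hq : q ∈ Set.Icc (0:ℝ) 1)
    (hl0 : 0 ≤ l) (hl1 : l ≤ 1) :
    (1 - l) * binEnt p + l * binEnt q ≤ binEnt ((1 - l) * p + l * q) := by
  have h := (Real.strictConcave_binEntropy.concaveOn).2 hp hq (show (0:ℝ) ≤ 1 - l by linarith) hl0 (show (1-l)+l = 1 by ring)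
  simp only [smul_eq_mul] at h
  have hlog : (0:ℝ) < Real.log 2 := Real.log_pos one_lt_two
  rw [binEnt_eq_div, binEnt_eq_div, binEnt_eq_div, div_eq_mul_inv, div_eq_mul_inv,
    div_eq_mul_inv]
  have hinv : (0:ℝ) ≤ (Real.log 2)⁻¹ := by positivity
  nlinarith [mul_le_mul_of_nonneg_right h hinv]

lemma logb_split (n0 n1 : ℝ) (h0 : 0 < n0) (h1 : 0 < n1) :
    Real.logb 2 (n0 + n1) = (1 - n1/(n0+n1)) * Real.logb 2 n0 + (n1/(n0+n1)) * Real.logb 2 n1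
      + binEnt (n1/(n0+n1)) := by
  have hn : 0 < n0 + n1 := by linarith
  have h1l : 1 - n1/(n0+n1) = n0/(n0+n1) := by field_simp; ring
  rw [binEnt, h1l, Real.logb_div h1.ne' hn.ne', Real.logb_div h0.ne' hn.ne']
  field_simp
  ring

open Classical in
noncomputable def emp (F : Finset (Finset ℝ)) (s : ℝ) : ℝ :=
  ((F.filter fun A => s ∈ A).card : ℝ) / (F.card : ℝ)

lemma emp_mem_Icc (F : Finset (Finset ℝ)) (s : ℝ) : emp F s ∈ Set.Icc (0:ℝ) 1 := by
  classical
  unfold emp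
  constructor
  · positivity
  · rcases Nat.eq_zero_or_pos F.card with h | h
    · simp [h]
    · rw [div_le_one (by exact_mod_cast h)]
      exact_mod_cast Finset.card_le_card (Finset.filter_subset _ _)

lemma entropy_key (S : Finset ℝ) : ∀ F : Finset (Finset ℝ),
    (∀ s : ℝ, s ∉ S → ∀ A ∈ F, ∀ B ∈ F, (s ∈ A ↔ s ∈ B)) → F.Nonempty →
    Real.logb 2 (F.card : ℝ) ≤ ∑ s ∈ S, binEnt (emp F s) := by
  classical
  induction S using Finset.induction_on with
  | empty =>
    intro F hF hne
    obtain ⟨A, hA⟩ := hne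
    have hFA : F = {A} := by
      apply Finset.eq_singleton_iff_unique_mem.2
      refine ⟨hA, fun B hB => ?_⟩
      ext s
      exact hF s (by simp) B hB A hA
    simp [hFA]
  | @insert a S ha IH =>
    intro F hF hne
    have hsum : ∑ s ∈ insert a S, binEnt (emp F s)
        = binEnt (emp F a) + ∑ s ∈ S, binEnt (emp F s) := Finset.sum_insert ha
    set F0 := F.filter (fun A => a ∉ A) with hF0
    set F1 := F.filter (fun A => a ∈ A) with hF1
    have hcards : F0.card + F1.card = F.card := by
      have h' := Finset.card_filter_add_card_filter_not (s := F) (p := fun A => a ∈ A)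
      rw [hF0, hF1]
      omega
    have hempa : emp F a = (F1.card : ℝ) / (F.card : ℝ) := by
      unfold emp
      rw [hF1]
    rcases Finset.eq_empty_or_nonempty F1 with h1 | h1
    · -- no set contains a
      have hno : ∀ A ∈ F, a ∉ A := by
        intro A hA haA
        have : A ∈ F1 := Finset.mem_filter.2 ⟨hA, haA⟩
        simp [h1] at this
      have hIH := IH F (fun s hs A hA B hB => by
        rcases eq_or_ne s a with rfl | hne'
        · simp [hno A hA, hno B hB]
        · exact hF s (by simp [hne', hs]) A hA B hB) hne
      have : emp F a = 0 := by
        rw [hempa, h1]; simp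
      rw [hsum, this, binEnt_zero, zero_add]
      exact hIH
    · rcases Finset.eq_empty_or_nonempty F0 with h0 | h0
      · -- every set contains a
        have hyes : ∀ A ∈ F, a ∈ A := by
          intro A hA
          by_contra haA
          have : A ∈ F0 := Finset.mem_filter.2 ⟨hA, haA⟩
          simp [h0] at this
        have hIH := IH F (fun s hs A hA B hB => by
          rcases eq_or_ne s a with rfl | hne'
          · simp [hyes A hA, hyes B hB]
          · exact hF s (by simp [hne', hs]) A hA B hB) hne
        have hF1F : F1 = F := Finset.filter_true_of_mem hyes
        have : emp F a = 1 := by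
          rw [hempa, hF1F, div_self]
          exact_mod_cast (Finset.card_pos.2 hne).ne'
        rw [hsum, this, binEnt_one, zero_add]
        exact hIH
      · -- both nonempty: the real case
        have hn0 : (0:ℝ) < F0.card := by exact_mod_cast Finset.card_pos.2 h0
        have hn1 : (0:ℝ) < F1.card := by exact_mod_cast Finset.card_pos.2 h1
        have hncast : (F.card : ℝ) = (F0.card : ℝ) + (F1.card : ℝ) := by
          exact_mod_cast hcards.symm
        have hn : (0:ℝ) < F.card := by rw [hncast]; linarith
        set l : ℝ := (F1.card : ℝ) / (F.card : ℝ) with hl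
        have hl0 : 0 ≤ l := by positivity
        have hl1 : l ≤ 1 := by
          rw [hl, div_le_one hn, hncast]; linarith
        -- membership constancy for sub-families
        have hcF0 : ∀ s : ℝ, s ∉ S → ∀ A ∈ F0, ∀ B ∈ F0, (s ∈ A ↔ s ∈ B) := by
          intro s hs A hA B hB
          rcases eq_or_ne s a with rfl | hne'
          · simp [(Finset.mem_filter.1 hA).2, (Finset.mem_filter.1 hB).2]
          · exact hF s (by simp [hne', hs]) A (Finset.filter_subset _ _ hA)
              B (Finset.filter_subset _ _ hB)
        have hcF1 : ∀ s : ℝ, s ∉ S → ∀ A ∈ F1, ∀ B ∈ F1, (s ∈ A ↔ s ∈ B) := by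
          intro s hs A hA B hB
          rcases eq_or_ne s a with rfl | hne'
          · simp [(Finset.mem_filter.1 hA).2, (Finset.mem_filter.1 hB).2]
          · exact hF s (by simp [hne', hs]) A (Finset.filter_subset _ _ hA)
              B (Finset.filter_subset _ _ hB)
        have hIH0 := IH F0 hcF0 h0
        have hIH1 := IH F1 hcF1 h1
        -- mixture identity for each s
        have hmix : ∀ s : ℝ, emp F s = (1 - l) * emp F0 s + l * emp F1 s := by
          intro s
          have hsplit : (F.filter fun A => s ∈ A).card
              = (F0.filter fun A => s ∈ A).card + (F1.filter fun A => s ∈ A).card := by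
            have h'' := Finset.card_filter_add_card_filter_not
              (s := F.filter fun A => s ∈ A) (p := fun A => a ∈ A)
            have e1 : (F.filter fun A => s ∈ A).filter (fun A => a ∈ A)
                = F1.filter fun A => s ∈ A := by
              rw [hF1, Finset.filter_filter, Finset.filter_filter]
              apply Finset.filter_congr
              intro A _
              exact ⟨fun h => ⟨h.2, h.1⟩, fun h => ⟨h.2, h.1⟩⟩
            have e0 : (F.filter fun A => s ∈ A).filter (fun A => ¬ a ∈ A)
                = F0.filter fun A => s ∈ A := by
              rw [hF0, Finset.filter_filter, Finset.filter_filter]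
              apply Finset.filter_congr
              intro A _
              exact ⟨fun h => ⟨h.2, h.1⟩, fun h => ⟨h.2, h.1⟩⟩
            rw [e1, e0] at h''
            omega
          have h1ml : 1 - l = (F0.card : ℝ) / (F.card : ℝ) := by
            rw [hl, hncast]; field_simp; ring
          have d0 : ((F0.card : ℝ)) ≠ 0 := hn0.ne'
          have d1 : ((F1.card : ℝ)) ≠ 0 := hn1.ne'
          have dn : ((F.card : ℝ)) ≠ 0 := hn.ne'
          unfold emp
          rw [h1ml, hl, hsplit]
          push_cast
          field_simp
        -- concavity pointwise
        have hconc : ∀ s ∈ S, (1 - l) * binEnt (emp F0 s) + l * binEnt (emp F1 s)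
            ≤ binEnt (emp F s) := by
          intro s _
          rw [hmix s]
          exact binEnt_concave (emp_mem_Icc F0 s) (emp_mem_Icc F1 s) hl0 hl1
        have hsumS : (1 - l) * (∑ s ∈ S, binEnt (emp F0 s)) + l * (∑ s ∈ S, binEnt (emp F1 s))
            ≤ ∑ s ∈ S, binEnt (emp F s) := by
          rw [Finset.mul_sum, Finset.mul_sum, ← Finset.sum_add_distrib]
          exact Finset.sum_le_sum hconc
        have hsplitlog : Real.logb 2 (F.card : ℝ)
            = (1 - l) * Real.logb 2 (F0.card : ℝ) + l * Real.logb 2 (F1.card : ℝ)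
              + binEnt l := by
          have hl' : l = (F1.card : ℝ) / ((F0.card : ℝ) + (F1.card : ℝ)) := by
            rw [hl, hncast]
          rw [hncast, hl']
          exact logb_split _ _ hn0 hn1
        rw [hsum, hempa, hsplitlog]
        have e0 : (1 - l) * Real.logb 2 (F0.card : ℝ) ≤ (1 - l) * ∑ s ∈ S, binEnt (emp F0 s) :=
          mul_le_mul_of_nonneg_left hIH0 (by linarith)
        have e1 : l * Real.logb 2 (F1.card : ℝ) ≤ l * ∑ s ∈ S, binEnt (emp F1 s) :=
          mul_le_mul_of_nonneg_left hIH1 hl0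
        linarith

lemma emp_weight (S : Finset ℝ) (F : Finset (Finset ℝ)) (hF : F ⊆ S.powerset)
    (hne : F.Nonempty) (x : ℝ) (hx : ∀ A ∈ F, ∑ s ∈ A, s ≤ x) :
    ∑ s ∈ S, s * emp F s ≤ x := by
  classical
  have hn : (0:ℝ) < F.card := by exact_mod_cast Finset.card_pos.2 hne
  have hswap : ∑ s ∈ S, s * ((F.filter fun A => s ∈ A).card : ℝ)
      = ∑ A ∈ F, ∑ s ∈ A, s := by
    have : ∀ s ∈ S, s * ((F.filter fun A => s ∈ A).card : ℝ)
        = ∑ A ∈ F, if s ∈ A then s else 0 := by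
      intro s _
      rw [Finset.card_filter]
      push_cast
      rw [Finset.mul_sum]
      apply Finset.sum_congr rfl
      intro A _
      by_cases h : s ∈ A <;> simp [h]
    rw [Finset.sum_congr rfl this, Finset.sum_comm]
    apply Finset.sum_congr rfl
    intro A hA
    rw [Finset.sum_ite_mem, (Finset.inter_eq_right).2 (Finset.mem_powerset.1 (hF hA))]
  have key : ∑ s ∈ S, s * emp F s = (∑ A ∈ F, ∑ s ∈ A, s) / (F.card : ℝ) := by
    unfold emp
    rw [← hswap, Finset.sum_div]
    apply Finset.sum_congr rfl
    intro s _
    ring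
  rw [key, div_le_iff₀ hn]
  calc ∑ A ∈ F, ∑ s ∈ A, s ≤ ∑ A ∈ F, x := Finset.sum_le_sum fun A hA => hx A hA
    _ = x * F.card := by rw [Finset.sum_const, nsmul_eq_mul]; ring

/-- The number of subsets of a finite set `S` of positive reals summing to at most `x`
is at most `2 ^ h`, where `h` is the supremum of `∑ s ∈ S, H(p s)` over all
`(p_s)` with `p_s ∈ [0,1]` and `∑ s ∈ S, s * p_s ≤ x`. -/
theorem count_subsets_sum_le_entropy_bound (S : Finset ℝ) (hS : ∀ s ∈ S, 0 < s)
    (x : ℝ) (hx : 0 ≤ x) :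
    (((S.powerset.filter fun A => ∑ s ∈ A, s ≤ x).card : ℝ)) ≤
      2 ^ sSup {t : ℝ | ∃ p : ℝ → ℝ, (∀ s ∈ S, p s ∈ Set.Icc (0:ℝ) 1) ∧
        (∑ s ∈ S, s * p s ≤ x) ∧ t = ∑ s ∈ S, binEnt (p s)} := by
  classical
  set T := {t : ℝ | ∃ p : ℝ → ℝ, (∀ s ∈ S, p s ∈ Set.Icc (0:ℝ) 1) ∧
        (∑ s ∈ S, s * p s ≤ x) ∧ t = ∑ s ∈ S, binEnt (p s)} with hT
  have hbdd : BddAbove T := by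
    refine ⟨(S.card : ℝ), ?_⟩
    rintro t ⟨p, hp, hpx, rfl⟩
    calc ∑ s ∈ S, binEnt (p s) ≤ ∑ s ∈ S, 1 :=
          Finset.sum_le_sum fun s _ => binEnt_le_one (p s)
      _ = (S.card : ℝ) := by simp
  set F := S.powerset.filter fun A => ∑ s ∈ A, s ≤ x with hFdef
  rcases Finset.eq_empty_or_nonempty F with h | hne
  · rw [h]
    simp only [Finset.card_empty, Nat.cast_zero]
    positivity
  · have hFsub : F ⊆ S.powerset := Finset.filter_subset _ _
    have hkey := entropy_key S F (fun s hs A hA B hB => by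
      have hA' := Finset.mem_powerset.1 (hFsub hA)
      have hB' := Finset.mem_powerset.1 (hFsub hB)
      constructor
      · intro h; exact absurd (hA' h) hs
      · intro h; exact absurd (hB' h) hs) hne
    have ht : (∑ s ∈ S, binEnt (emp F s)) ∈ T := by
      refine ⟨emp F, fun s _ => emp_mem_Icc F s, ?_, rfl⟩
      apply emp_weight S F hFsub hne
      intro A hA
      exact (Finset.mem_filter.1 hA).2
    have hn : (0:ℝ) < F.card := by exact_mod_cast Finset.card_pos.2 hne
    calc (F.card : ℝ) = 2 ^ Real.logb 2 (F.card : ℝ) :=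
          (Real.rpow_logb two_pos (by norm_num) hn).symm
      _ ≤ 2 ^ (∑ s ∈ S, binEnt (emp F s)) :=
          Real.rpow_le_rpow_of_exponent_le one_le_two hkey
      _ ≤ 2 ^ sSup T :=
          Real.rpow_le_rpow_of_exponent_le one_le_two (le_csSup hbdd ht)
end

section
/- If (p₁*,…,pₙ*) maximizes ∑_{m=1}^n h(p_m) over [0,1]^n subject to ∑_{m=1}^n p_m/m = x, where 0 < x < (1/2)∑_{m=1}^n 1/m, then there exists a real constant c' such that p_m* = 1/(1 + e^{c'/m}) for every m ∈ [n]. -/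
/-- Strict tangent-line (Gibbs) inequality for the natural-log entropy. -/
lemma logL_lt (q p : ℝ) (hq0 : 0 < q) (hq1 : q < 1) (hp0 : 0 ≤ p) (hp1 : p ≤ 1)
    (hne : p ≠ q) :
    -p * Real.log p - (1 - p) * Real.log (1 - p)
      < -p * Real.log q - (1 - p) * Real.log (1 - q) := by
  rcases eq_or_lt_of_le hp0 with h0 | hp0'
  · have hlog : Real.log (1 - q) < 0 := Real.log_neg (by linarith) (by linarith)
    rw [← h0]
    norm_num
    linarith
  rcases eq_or_lt_of_le hp1 with h1 | hp1'
  · have hlog : Real.log q < 0 := Real.log_neg hq0 hq1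
    rw [h1]
    norm_num
    linarith
  -- interior case
  have hqp : q / p ≠ 1 := by
    intro h
    apply hne
    field_simp at h
    linarith
  have h1 : Real.log (q / p) < q / p - 1 :=
    Real.log_lt_sub_one_of_pos (div_pos hq0 hp0') hqp
  have h2 : Real.log ((1 - q) / (1 - p)) ≤ (1 - q) / (1 - p) - 1 :=
    Real.log_le_sub_one_of_pos (div_pos (by linarith) (by linarith))
  have h1' : p * (Real.log q - Real.log p) < q - p := by
    have h := mul_lt_mul_of_pos_left h1 hp0'
    rw [Real.log_div hq0.ne' hp0'.ne'] at h
    have heq : p * (q / p - 1) = q - p := by field_simp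
    linarith
  have h2' : (1 - p) * (Real.log (1 - q) - Real.log (1 - p)) ≤ (1 - q) - (1 - p) := by
    have h := mul_le_mul_of_nonneg_left h2 (by linarith : (0:ℝ) ≤ 1 - p)
    rw [Real.log_div (by linarith : (1:ℝ) - q ≠ 0) (by linarith : (1:ℝ) - p ≠ 0)] at h
    have hne1 : (1:ℝ) - p ≠ 0 := by
      have : (0:ℝ) < 1 - p := by linarith
      exact this.ne'
    have heq : (1 - p) * ((1 - q) / (1 - p) - 1) = (1 - q) - (1 - p) := by
      rw [mul_sub, mul_one, mul_div_cancel₀ _ hne1]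
    linarith
  nlinarith [h1', h2']

lemma logL_le (q p : ℝ) (hq0 : 0 < q) (hq1 : q < 1) (hp0 : 0 ≤ p) (hp1 : p ≤ 1) :
    -p * Real.log p - (1 - p) * Real.log (1 - p)
      ≤ -p * Real.log q - (1 - p) * Real.log (1 - q) := by
  rcases eq_or_ne p q with rfl | h
  · exact le_rfl
  · exact (logL_lt q p hq0 hq1 hp0 hp1 h).le

lemma binEnt_eq (p : ℝ) :
    binEnt p = (-p * Real.log p - (1 - p) * Real.log (1 - p)) / Real.log 2 := by
  simp only [binEnt, Real.logb]
  ring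

/-- If `p*` maximizes `∑_{m=1}^n h(p_m)` over `[0,1]^n` subject to
`∑_{m=1}^n p_m/m = x`, where `0 < x < (1/2)∑_{m=1}^n 1/m`, then there is a
real `c'` with `p*_m = 1/(1 + e^{c'/m})` for all `1 ≤ m ≤ n`. -/
theorem entropy_maximizer_form (n : ℕ) (hn : 0 < n) (x : ℝ) (hx0 : 0 < x)
    (hx : x < (1 / 2) * ∑ m ∈ Finset.Icc 1 n, (1 : ℝ) / m)
    (p : ℕ → ℝ) (hp : ∀ m ∈ Finset.Icc 1 n, p m ∈ Set.Icc (0:ℝ) 1)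
    (hpsum : ∑ m ∈ Finset.Icc 1 n, p m / m = x)
    (hmax : ∀ q : ℕ → ℝ, (∀ m ∈ Finset.Icc 1 n, q m ∈ Set.Icc (0:ℝ) 1) →
      (∑ m ∈ Finset.Icc 1 n, q m / m = x) →
      ∑ m ∈ Finset.Icc 1 n, binEnt (q m) ≤ ∑ m ∈ Finset.Icc 1 n, binEnt (p m)) :
    ∃ c' : ℝ, ∀ m ∈ Finset.Icc 1 n, p m = 1 / (1 + Real.exp (c' / m)) := by
  classical
  set f : ℝ → ℝ := fun c => ∑ m ∈ Finset.Icc 1 n, (1 / (1 + Real.exp (c / m))) / m with hf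
  have hcont : Continuous f := by
    apply continuous_finset_sum
    intro m _
    have hden : Continuous fun c : ℝ => 1 + Real.exp (c / m) := by continuity
    exact (continuous_const.div hden (fun c => by positivity)).div_const _
  have hf0 : f 0 = (1 / 2) * ∑ m ∈ Finset.Icc 1 n, (1 : ℝ) / m := by
    rw [hf, Finset.mul_sum]
    apply Finset.sum_congr rfl
    intro m _
    simp only [zero_div, Real.exp_zero]
    norm_num [div_eq_mul_inv]
  have hn0 : (0:ℝ) < n := by exact_mod_cast hn
  have hxn : x < n := by
    have hS : ∑ m ∈ Finset.Icc 1 n, (1 : ℝ) / m ≤ n := by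
      calc ∑ m ∈ Finset.Icc 1 n, (1 : ℝ) / m ≤ ∑ m ∈ Finset.Icc 1 n, (1 : ℝ) := by
            apply Finset.sum_le_sum
            intro m hm
            simp only [Finset.mem_Icc] at hm
            have : (1:ℝ) ≤ m := by exact_mod_cast hm.1
            rw [div_le_one (by linarith)]
            linarith
        _ = n := by simp
    linarith
  set C : ℝ := n * Real.log (n / x) with hC
  have hCpos : 0 < C := by
    apply mul_pos hn0
    apply Real.log_pos
    rw [lt_div_iff₀ hx0]
    linarith
  have hCn : Real.exp (C / n) = n / x := by
    have : C / n = Real.log (n / x) := by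
      rw [hC]
      field_simp
    rw [this, Real.exp_log (by positivity)]
  have hfC : f C ≤ x := by
    have hterm : ∀ m ∈ Finset.Icc 1 n, (1 / (1 + Real.exp (C / m))) / m ≤ x / n := by
      intro m hm
      simp only [Finset.mem_Icc] at hm
      have hm1 : (1:ℝ) ≤ m := by exact_mod_cast hm.1
      have hmn : (m:ℝ) ≤ n := by exact_mod_cast hm.2
      have he1 : Real.exp (C / n) ≤ Real.exp (C / m) := by
        apply Real.exp_le_exp.2
        apply div_le_div_of_nonneg_left hCpos.le (by linarith) hmn
      calc (1 / (1 + Real.exp (C / m))) / m ≤ 1 / (1 + Real.exp (C / m)) := by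
            apply div_le_self (by positivity) hm1
        _ ≤ 1 / Real.exp (C / m) := by
            apply one_div_le_one_div_of_le (Real.exp_pos _)
            linarith
        _ ≤ 1 / Real.exp (C / n) := by
            apply one_div_le_one_div_of_le (Real.exp_pos _) he1
        _ = x / n := by rw [hCn, one_div_div]
    calc f C ≤ ∑ m ∈ Finset.Icc 1 n, x / n := Finset.sum_le_sum hterm
      _ = x := by
          rw [Finset.sum_const, Nat.card_Icc]
          simp only [Nat.add_sub_cancel, nsmul_eq_mul]
          field_simp
  have hx_mem : x ∈ Set.Icc (f C) (f 0) := ⟨hfC, by rw [hf0]; linarith⟩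
  obtain ⟨c', _, hfc'⟩ := intermediate_value_Icc' hCpos.le hcont.continuousOn hx_mem
  refine ⟨c', ?_⟩
  by_contra hbad
  push_neg at hbad
  obtain ⟨m₀, hm₀, hne₀⟩ := hbad
  set q : ℕ → ℝ := fun m => 1 / (1 + Real.exp (c' / m)) with hqdef
  have hq01 : ∀ m ∈ Finset.Icc 1 n, 0 < q m ∧ q m < 1 := by
    intro m _
    constructor
    · have : (0:ℝ) < 1 + Real.exp (c' / m) := by positivity
      positivity
    · rw [hqdef]
      have := Real.exp_pos (c' / m)
      rw [div_lt_one (by linarith)]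
      linarith
  have hqsum : ∑ m ∈ Finset.Icc 1 n, q m / m = x := hfc'
  have hslope : ∀ m ∈ Finset.Icc 1 n,
      Real.log (1 - q m) - Real.log (q m) = c' / m := by
    intro m _
    have he : (0:ℝ) < Real.exp (c' / m) := Real.exp_pos _
    have hd : (0:ℝ) < 1 + Real.exp (c' / m) := by linarith
    have h1q : 1 - q m = Real.exp (c' / m) / (1 + Real.exp (c' / m)) := by
      rw [hqdef]
      field_simp
      ring
    rw [h1q, hqdef]
    simp only
    rw [Real.log_div he.ne' hd.ne', Real.log_div one_ne_zero hd.ne', Real.log_exp,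
      Real.log_one]
    ring
  set L : ℝ → ℝ := fun t => -t * Real.log t - (1 - t) * Real.log (1 - t) with hL
  have htangent_le : ∀ m ∈ Finset.Icc 1 n,
      L (p m) ≤ L (q m) + (c' / m) * (p m - q m) := by
    intro m hm
    obtain ⟨hq0, hq1⟩ := hq01 m hm
    obtain ⟨hp0, hp1⟩ := hp m hm
    have h := logL_le (q m) (p m) hq0 hq1 hp0 hp1
    rw [← hslope m hm]
    have heq : L (q m) + (Real.log (1 - q m) - Real.log (q m)) * (p m - q m)
        = -p m * Real.log (q m) - (1 - p m) * Real.log (1 - q m) := by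
      rw [hL]; ring
    rw [heq]
    exact h
  have htangent_lt :
      L (p m₀) < L (q m₀) + (c' / m₀) * (p m₀ - q m₀) := by
    obtain ⟨hq0, hq1⟩ := hq01 m₀ hm₀
    obtain ⟨hp0, hp1⟩ := hp m₀ hm₀
    have h := logL_lt (q m₀) (p m₀) hq0 hq1 hp0 hp1 hne₀
    rw [← hslope m₀ hm₀]
    have heq : L (q m₀) + (Real.log (1 - q m₀) - Real.log (q m₀)) * (p m₀ - q m₀)
        = -p m₀ * Real.log (q m₀) - (1 - p m₀) * Real.log (1 - q m₀) := by
      rw [hL]; ring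
    rw [heq]
    exact h
  have hsum_lt : ∑ m ∈ Finset.Icc 1 n, L (p m)
      < ∑ m ∈ Finset.Icc 1 n, (L (q m) + (c' / m) * (p m - q m)) :=
    Finset.sum_lt_sum htangent_le ⟨m₀, hm₀, htangent_lt⟩
  have hsum_eq : ∑ m ∈ Finset.Icc 1 n, (L (q m) + (c' / m) * (p m - q m))
      = ∑ m ∈ Finset.Icc 1 n, L (q m) := by
    rw [Finset.sum_add_distrib]
    have h2 : ∑ m ∈ Finset.Icc 1 n, (c' / m) * (p m - q m)
        = c' * (∑ m ∈ Finset.Icc 1 n, p m / m)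
          - c' * (∑ m ∈ Finset.Icc 1 n, q m / m) := by
      rw [Finset.mul_sum, Finset.mul_sum, ← Finset.sum_sub_distrib]
      apply Finset.sum_congr rfl
      intro m _
      ring
    rw [h2, hpsum, hqsum]
    ring
  have hkey : ∑ m ∈ Finset.Icc 1 n, L (p m) < ∑ m ∈ Finset.Icc 1 n, L (q m) := by
    rw [← hsum_eq]; exact hsum_lt
  have hq01' : ∀ m ∈ Finset.Icc 1 n, q m ∈ Set.Icc (0:ℝ) 1 := by
    intro m hm
    obtain ⟨h0, h1⟩ := hq01 m hm
    exact ⟨h0.le, h1.le⟩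
  have hmaxq := hmax q hq01' hqsum
  have hlog2 : (0:ℝ) < Real.log 2 := Real.log_pos (by norm_num)
  have hb : ∀ g : ℕ → ℝ, ∑ m ∈ Finset.Icc 1 n, binEnt (g m)
      = (∑ m ∈ Finset.Icc 1 n, L (g m)) / Real.log 2 := by
    intro g
    rw [Finset.sum_div]
    apply Finset.sum_congr rfl
    intro m _
    rw [binEnt_eq, hL]
  rw [hb p, hb q] at hmaxq
  rw [div_le_div_iff₀ hlog2 hlog2] at hmaxq
  have h2 : ∑ m ∈ Finset.Icc 1 n, L (q m) ≤ ∑ m ∈ Finset.Icc 1 n, L (p m) :=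
    le_of_mul_le_mul_right hmaxq hlog2
  linarith
end

section
/- For every x > 0 there exists a unique real number λ > 0 such that ∫₀¹ 1/(y(1 + e^{λ/y})) dy = x; moreover the map λ ↦ ∫₀¹ 1/(y(1 + e^{λ/y})) dy is strictly decreasing on (0,∞), tends to ∞ as λ → 0⁺, and tends to 0 as λ → ∞. -/
open intervalIntegral Filter MeasureTheory Set

noncomputable def fI (l y : ℝ) : ℝ := 1 / (y * (1 + Real.exp (l / y)))

lemma denom_pos (l : ℝ) {y : ℝ} (hy : 0 < y) : 0 < y * (1 + Real.exp (l / y)) := by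
  positivity

lemma fI_nonneg (l : ℝ) {y : ℝ} (hy : 0 < y) : 0 ≤ fI l y :=
  le_of_lt (by unfold fI; positivity)

lemma fI_anti {a b y : ℝ} (hy : 0 < y) (hab : a ≤ b) : fI b y ≤ fI a y := by
  apply one_div_le_one_div_of_le (denom_pos a hy)
  gcongr

lemma fI_lt {a b y : ℝ} (hy : 0 < y) (hab : a < b) : fI b y < fI a y := by
  apply one_div_lt_one_div_of_lt (denom_pos a hy)
  have h : a / y < b / y := (div_lt_div_iff_of_pos_right hy).mpr hab
  have := Real.exp_lt_exp.mpr h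
  nlinarith

lemma fI_meas (l : ℝ) : Measurable (fI l) := by
  unfold fI; fun_prop

lemma fI_le_bound {l y : ℝ} (hl : 0 < l) (hy : 0 < y) : fI l y ≤ 1 / l := by
  apply one_div_le_one_div_of_le hl
  have h := Real.add_one_le_exp (l / y)
  have h2 : l / y * y = l := div_mul_cancel₀ l (ne_of_gt hy)
  nlinarith

lemma fI_int {l : ℝ} (hl : 0 < l) : IntegrableOn (fI l) (Ioc 0 1) := by
  apply Integrable.mono' (g := fun _ => 1 / l)
    (integrableOn_const (by simp) (by simp))
    ((fI_meas l).aestronglyMeasurable)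
  filter_upwards [ae_restrict_mem measurableSet_Ioc] with y hy
  rw [Real.norm_eq_abs, abs_of_nonneg (fI_nonneg l hy.1)]
  exact fI_le_bound hl hy.1

lemma G_contAt {l0 : ℝ} (hl0 : 0 < l0) :
    ContinuousAt (fun l => ∫ y in Ioc (0:ℝ) 1, fI l y) l0 := by
  apply MeasureTheory.continuousAt_of_dominated (bound := fI (l0 / 2))
  · filter_upwards with x
    exact (fI_meas x).aestronglyMeasurable
  · filter_upwards [isOpen_Ioi.mem_nhds (show l0 / 2 < l0 by linarith)] with x hx
    filter_upwards [ae_restrict_mem measurableSet_Ioc] with y hy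
    rw [Real.norm_eq_abs, abs_of_nonneg (fI_nonneg x hy.1)]
    exact fI_anti hy.1 (le_of_lt hx)
  · exact fI_int (by linarith)
  · filter_upwards [ae_restrict_mem measurableSet_Ioc] with y hy
    have hc : Continuous fun x : ℝ => y * (1 + Real.exp (x / y)) := by continuity
    exact continuousAt_const.div hc.continuousAt (ne_of_gt (denom_pos _ hy.1))

lemma G_anti : StrictAntiOn (fun l => ∫ y in Ioc (0:ℝ) 1, fI l y) (Ioi 0) := by
  intro a ha b hb hab
  simp only [mem_Ioi] at ha hb
  have hIa := fI_int ha
  have hIb := fI_int hb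
  have key : 0 < ∫ y in Ioc (0:ℝ) 1, (fI a y - fI b y) := by
    rw [setIntegral_pos_iff_support_of_nonneg_ae]
    · have hsub : Ioc (0:ℝ) 1 ⊆ Function.support (fun y => fI a y - fI b y) := by
        intro y hy
        exact sub_ne_zero.2 (ne_of_gt (fI_lt hy.1 hab))
      calc (0 : ENNReal) < 1 := by norm_num
        _ = volume (Ioc (0:ℝ) 1) := by simp
        _ ≤ volume (Function.support (fun y => fI a y - fI b y) ∩ Ioc 0 1) :=
            measure_mono (subset_inter hsub subset_rfl)
    · filter_upwards [ae_restrict_mem measurableSet_Ioc] with y hy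
      exact sub_nonneg.2 (fI_anti hy.1 hab.le)
    · exact hIa.sub hIb
  rw [integral_sub hIa hIb] at key
  linarith

lemma G_top : Tendsto (fun l => ∫ y in Ioc (0:ℝ) 1, fI l y) atTop (nhds 0) := by
  have hub : ∀ᶠ l in atTop, (∫ y in Ioc (0:ℝ) 1, fI l y) ≤ Real.exp (-l) := by
    filter_upwards [eventually_ge_atTop 1] with l hl
    have hlpos : (0:ℝ) < l := by linarith
    have hpt : ∀ y ∈ Ioc (0:ℝ) 1, fI l y ≤ Real.exp (-l) := by
      intro y hy
      obtain ⟨hy0, hy1⟩ := hy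
      have hexp : Real.exp l ≤ y * (1 + Real.exp (l / y)) := by
        have h1 : Real.exp (l / y) = Real.exp l * Real.exp (l / y - l) := by
          rw [← Real.exp_add]; ring_nf
        have h2 : l / y - l + 1 ≤ Real.exp (l / y - l) := Real.add_one_le_exp _
        have h3 : l / y * y = l := div_mul_cancel₀ l (ne_of_gt hy0)
        have h4 := Real.exp_pos l
        have h5 : y * (l / y - l + 1) ≤ y * Real.exp (l / y - l) :=
          mul_le_mul_of_nonneg_left h2 hy0.le
        have h6 : y * (l / y - l + 1) = l - l * y + y := by
          have : y * (l / y) = l := by rw [mul_comm]; exact h3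
          nlinarith
        have h7 : (1:ℝ) ≤ l - l * y + y := by nlinarith
        calc Real.exp l = Real.exp l * 1 := by ring
          _ ≤ Real.exp l * (l - l * y + y) := by nlinarith
          _ ≤ Real.exp l * (y * Real.exp (l / y - l)) := by nlinarith
          _ = y * Real.exp (l / y) := by rw [h1]; ring
          _ ≤ y * (1 + Real.exp (l / y)) := by nlinarith
      rw [Real.exp_neg, ← one_div]
      exact one_div_le_one_div_of_le (Real.exp_pos l) hexp
    calc (∫ y in Ioc (0:ℝ) 1, fI l y) ≤ ∫ _ in Ioc (0:ℝ) 1, Real.exp (-l) :=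
          setIntegral_mono_on (fI_int hlpos)
            (integrableOn_const (by simp) (by simp)) measurableSet_Ioc hpt
      _ = Real.exp (-l) := by simp
  have hlb : ∀ᶠ l in atTop, (0:ℝ) ≤ ∫ y in Ioc (0:ℝ) 1, fI l y := by
    filter_upwards with l
    exact setIntegral_nonneg measurableSet_Ioc fun y hy => fI_nonneg l hy.1
  have h0 : Tendsto (fun l : ℝ => Real.exp (-l)) atTop (nhds 0) :=
    Real.tendsto_exp_neg_atTop_nhds_zero
  exact tendsto_of_tendsto_of_tendsto_of_le_of_le' tendsto_const_nhds h0 hlb hub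

lemma G_zero : Tendsto (fun l => ∫ y in Ioc (0:ℝ) 1, fI l y) (nhdsWithin 0 (Ioi 0)) atTop := by
  have h1 : Tendsto (fun l : ℝ => -Real.log l / (1 + Real.exp 1)) (nhdsWithin 0 (Ioi 0)) atTop := by
    apply Tendsto.atTop_div_const (by positivity)
    exact tendsto_neg_atBot_atTop.comp Real.tendsto_log_nhdsGT_zero
  apply tendsto_atTop_mono' _ _ h1
  filter_upwards [Ioo_mem_nhdsGT_of_mem ⟨le_refl 0, one_pos⟩] with l hl
  obtain ⟨hl0, hl1⟩ := hl
  have hInt := fI_int hl0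
  have hgc : ContinuousOn (fun y : ℝ => 1 / ((1 + Real.exp 1) * y)) (Icc l 1) := by
    apply ContinuousOn.div continuousOn_const (by fun_prop)
    intro y hy
    have : 0 < y := lt_of_lt_of_le hl0 hy.1
    positivity
  have hg_int : IntegrableOn (fun y : ℝ => 1 / ((1 + Real.exp 1) * y)) (Ioc l 1) :=
    (hgc.integrableOn_Icc).mono_set Ioc_subset_Icc_self
  have step2 : (∫ y in Ioc l 1, 1 / ((1 + Real.exp 1) * y)) ≤ ∫ y in Ioc l 1, fI l y := by
    apply setIntegral_mono_on hg_int (hInt.mono_set (Ioc_subset_Ioc_left hl0.le)) measurableSet_Ioc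
    intro y hy
    obtain ⟨hly, hy1⟩ := hy
    have hy0 : 0 < y := hl0.trans hly
    have hle : l / y ≤ 1 := (div_le_one hy0).mpr (hly.le.trans (le_refl y))
    have hexp : Real.exp (l / y) ≤ Real.exp 1 := Real.exp_le_exp.mpr hle
    unfold fI
    apply one_div_le_one_div_of_le (by positivity)
    nlinarith
  have step1 : (∫ y in Ioc l 1, fI l y) ≤ ∫ y in Ioc (0:ℝ) 1, fI l y := by
    apply setIntegral_mono_set hInt
    · filter_upwards [ae_restrict_mem measurableSet_Ioc] with y hy
      exact fI_nonneg l hy.1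
    · exact (Ioc_subset_Ioc_left hl0.le).eventuallyLE
  have step3 : (∫ y in Ioc l 1, 1 / ((1 + Real.exp 1) * y)) = -Real.log l / (1 + Real.exp 1) := by
    rw [← intervalIntegral.integral_of_le hl1.le]
    have he : (fun y : ℝ => 1 / ((1 + Real.exp 1) * y)) = fun y => (1 + Real.exp 1)⁻¹ * (1 / y) := by
      funext y
      simp [one_div, mul_inv, mul_comm]
    rw [he, intervalIntegral.integral_const_mul, integral_one_div]
    · rw [one_div, Real.log_inv]
      field_simp
    · intro h
      rw [uIcc_of_le hl1.le] at h
      exact absurd h.1 (not_le.mpr hl0)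
  linarith

/-- For every `x > 0` there is a unique `λ > 0` with
`∫₀¹ 1/(y(1+e^{λ/y})) dy = x`; moreover `λ ↦ ∫₀¹ 1/(y(1+e^{λ/y})) dy` is
strictly decreasing on `(0,∞)`, tends to `∞` as `λ → 0⁺` and to `0` as
`λ → ∞`. -/
theorem lambda_exists_unique :
    (∀ x : ℝ, 0 < x → ∃! l : ℝ, 0 < l ∧
      (∫ y in (0:ℝ)..1, 1 / (y * (1 + Real.exp (l / y)))) = x) ∧
    StrictAntiOn (fun l : ℝ => ∫ y in (0:ℝ)..1, 1 / (y * (1 + Real.exp (l / y))))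
      (Set.Ioi 0) ∧
    Tendsto (fun l : ℝ => ∫ y in (0:ℝ)..1, 1 / (y * (1 + Real.exp (l / y))))
      (nhdsWithin 0 (Set.Ioi 0)) atTop ∧
    Tendsto (fun l : ℝ => ∫ y in (0:ℝ)..1, 1 / (y * (1 + Real.exp (l / y))))
      atTop (nhds 0) := by
  have hcv : ∀ l : ℝ, (∫ y in (0:ℝ)..1, 1 / (y * (1 + Real.exp (l / y)))) =
      ∫ y in Ioc (0:ℝ) 1, fI l y := by
    intro l
    rw [intervalIntegral.integral_of_le zero_le_one]
    rfl
  simp only [hcv]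
  refine ⟨?_, G_anti, G_zero, G_top⟩
  intro x hx
  set G := fun l => ∫ y in Ioc (0:ℝ) 1, fI l y with hG
  obtain ⟨a, hax, ha0⟩ := ((G_zero.eventually_gt_atTop x).and self_mem_nhdsWithin).exists
  obtain ⟨b, hbx, hab⟩ := ((G_top.eventually_lt_const hx).and (eventually_gt_atTop a)).exists
  have ha0' : (0:ℝ) < a := ha0
  have hcont : ContinuousOn G (Icc a b) := fun l hl =>
    (G_contAt (ha0'.trans_le hl.1)).continuousWithinAt
  have hivt := intermediate_value_Icc' hab.le hcont
  have hxmem : x ∈ Icc (G b) (G a) := ⟨hbx.le, hax.le⟩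
  obtain ⟨l, hlmem, hGl⟩ := hivt hxmem
  have hl0 : 0 < l := ha0'.trans_le hlmem.1
  refine ⟨l, ⟨hl0, hGl⟩, ?_⟩
  rintro l' ⟨hl'0, hGl'⟩
  exact G_anti.injOn (mem_Ioi.mpr hl'0) (mem_Ioi.mpr hl0) (hGl'.trans hGl.symm)
end

section
/- Let c > 0 and n a positive integer with cn ≥ 1. Then ∑_{m=1}^{n} e^{-cn/m}/m² = Θ(1/(cn)), i.e., there are absolute constants C₁, C₂ > 0 with C₁/(cn) ≤ ∑_{m=1}^{n} e^{-cn/m}/m² ≤ C₂/(cn). -/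
open Finset

/-- Telescoping upper bound: `∑_{m=a+1}^n 1/m² ≤ 1/a - 1/n`. -/
lemma aux_tele_upper (a : ℕ) (ha : 1 ≤ a) : ∀ n, a ≤ n →
    ∑ m ∈ Finset.Ioc a n, 1 / (m : ℝ) ^ 2 ≤ 1 / (a : ℝ) - 1 / (n : ℝ) := by
  intro n
  induction n with
  | zero => intro h; omega
  | succ n ih =>
    intro h
    rcases eq_or_lt_of_le h with he | hlt
    · rw [← he]; simp
    · have han : a ≤ n := by omega
      rw [Finset.sum_Ioc_succ_top han]
      have h1 : (1:ℝ) ≤ a := by exact_mod_cast ha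
      have hn1 : (1:ℝ) ≤ n := by exact_mod_cast (ha.trans han)
      have hih := ih han
      have key : (1:ℝ) / ((n:ℝ) + 1) ^ 2 ≤ 1 / (n:ℝ) - 1 / ((n:ℝ) + 1) := by
        rw [div_sub_div _ _ (by positivity) (by positivity),
          div_le_div_iff₀ (by positivity) (by positivity)]
        nlinarith
      push_cast
      linarith

/-- Telescoping lower bound: `∑_{m=a}^n 1/m² ≥ 1/a - 1/(n+1)`. -/
lemma aux_tele_lower (a : ℕ) (ha : 1 ≤ a) : ∀ n, a ≤ n →
    1 / (a : ℝ) - 1 / ((n : ℝ) + 1) ≤ ∑ m ∈ Finset.Icc a n, 1 / (m : ℝ) ^ 2 := by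
  intro n
  induction n with
  | zero => intro h; omega
  | succ n ih =>
    intro h
    have h1 : (1:ℝ) ≤ a := by exact_mod_cast ha
    rcases eq_or_lt_of_le h with he | hlt
    · have hca : ((n:ℝ) + 1) = (a:ℝ) := by exact_mod_cast congrArg (Nat.cast : ℕ → ℝ) he.symm
      rw [← he]
      simp only [Finset.Icc_self, Finset.sum_singleton]
      rw [div_sub_div _ _ (by positivity) (by positivity),
        div_le_div_iff₀ (by positivity) (by positivity)]
      nlinarith
    · have han : a ≤ n := by omega
      rw [Finset.sum_Icc_succ_top (by omega)]
      have hn1 : (1:ℝ) ≤ n := by exact_mod_cast (ha.trans han)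
      have hih := ih han
      have key : (1:ℝ) / ((n:ℝ) + 1) - 1 / ((n:ℝ) + 1 + 1) ≤ 1 / ((n:ℝ) + 1) ^ 2 := by
        rw [div_sub_div _ _ (by positivity) (by positivity),
          div_le_div_iff₀ (by positivity) (by positivity)]
        nlinarith
      push_cast
      linarith

/-- For `x > 0`, `e^{-x} ≤ 27 / x³`. -/
lemma aux_exp_neg_le (x : ℝ) (hx : 0 < x) : Real.exp (-x) ≤ 27 / x ^ 3 := by
  have h := Real.add_one_le_exp (x / 3)
  have hexp : Real.exp x = Real.exp (x / 3) ^ 3 := by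
    rw [← Real.exp_nat_mul]
    congr 1
    push_cast
    ring
  have h3 : x ^ 3 / 27 ≤ Real.exp x := by
    rw [hexp]
    calc x ^ 3 / 27 = (x / 3) ^ 3 := by ring
    _ ≤ (x / 3 + 1) ^ 3 := by
        apply pow_le_pow_left₀ (by positivity)
        linarith
    _ ≤ Real.exp (x / 3) ^ 3 := by
        apply pow_le_pow_left₀ (by positivity)
        linarith
  have hx3 : (0:ℝ) < x ^ 3 / 27 := by positivity
  rw [Real.exp_neg]
  calc (Real.exp x)⁻¹ ≤ (x ^ 3 / 27)⁻¹ := inv_anti₀ hx3 h3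
  _ = 27 / x ^ 3 := by rw [inv_div]

/-- For `c > 0`, `c ≤ 1` and `cn ≥ 1`, `∑_{m=1}^n e^{-cn/m}/m² = Θ(1/(cn))`
with absolute implied constants. -/
theorem sum_exp_div_sq_theta :
    ∃ C₁ C₂ : ℝ, 0 < C₁ ∧ 0 < C₂ ∧
      ∀ (c : ℝ) (n : ℕ), 0 < c → c ≤ 1 → 1 ≤ c * n →
        C₁ / (c * n) ≤ ∑ m ∈ Finset.Icc 1 n, Real.exp (-(c * n) / m) / (m : ℝ) ^ 2 ∧
        ∑ m ∈ Finset.Icc 1 n, Real.exp (-(c * n) / m) / (m : ℝ) ^ 2 ≤ C₂ / (c * n) := by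
  refine ⟨3 / 10 * Real.exp (-4), 29, by positivity, by norm_num, ?_⟩
  intro c n hc hc1 hcn
  set t : ℝ := c * n with ht
  have ht1 : (1:ℝ) ≤ t := hcn
  have ht0 : (0:ℝ) < t := by linarith
  have hn : 1 ≤ n := by
    by_contra h
    push_neg at h
    interval_cases n
    simp [ht] at ht1
    linarith
  have hnR : (1:ℝ) ≤ (n:ℝ) := by exact_mod_cast hn
  have htn : t ≤ n := by
    calc t = c * n := rfl
    _ ≤ 1 * n := by
        apply mul_le_mul_of_nonneg_right hc1 (by positivity)
    _ = n := one_mul _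
  constructor
  · -- Lower bound
    set a : ℕ := ⌈t / 4⌉₊ with haa
    have ha1 : 1 ≤ a := by
      rw [haa]
      exact Nat.one_le_iff_ne_zero.mpr (by
        simp [Nat.ceil_eq_zero]
        linarith)
    have haR1 : (1:ℝ) ≤ (a:ℝ) := by exact_mod_cast ha1
    have han : a ≤ n := by
      rw [haa]
      apply Nat.ceil_le.mpr
      linarith
    have hta : t ≤ 4 * a := by
      have := Nat.le_ceil (t / 4)
      rw [← haa] at this
      linarith
    have haup : (a:ℝ) ≤ t / 4 + 1 := by
      have := Nat.ceil_lt_add_one (show (0:ℝ) ≤ t / 4 by positivity)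
      rw [← haa] at this
      linarith
    have step2 : ∀ m ∈ Finset.Icc a n,
        Real.exp (-4) * (1 / (m:ℝ) ^ 2) ≤ Real.exp (-t / m) / (m:ℝ) ^ 2 := by
      intro m hm
      rw [Finset.mem_Icc] at hm
      have hm1 : 1 ≤ m := le_trans ha1 hm.1
      have hmR : (1:ℝ) ≤ (m:ℝ) := by exact_mod_cast hm1
      have hma : (a:ℝ) ≤ (m:ℝ) := by exact_mod_cast hm.1
      rw [mul_one_div]
      apply div_le_div_of_nonneg_right _ (by positivity)
      · apply Real.exp_le_exp.mpr
        rw [neg_div, neg_le_neg_iff, div_le_iff₀ (by linarith)]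
        nlinarith
    have step3 : Real.exp (-4) * (1 / (a:ℝ) - 1 / ((n:ℝ) + 1)) ≤
        ∑ m ∈ Finset.Icc a n, Real.exp (-t / m) / (m:ℝ) ^ 2 := by
      calc Real.exp (-4) * (1 / (a:ℝ) - 1 / ((n:ℝ) + 1))
          ≤ Real.exp (-4) * ∑ m ∈ Finset.Icc a n, 1 / (m:ℝ) ^ 2 := by
            apply mul_le_mul_of_nonneg_left (aux_tele_lower a ha1 n han) (le_of_lt (Real.exp_pos _))
      _ = ∑ m ∈ Finset.Icc a n, Real.exp (-4) * (1 / (m:ℝ) ^ 2) := Finset.mul_sum _ _ _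
      _ ≤ _ := Finset.sum_le_sum step2
    have step4 : ∑ m ∈ Finset.Icc a n, Real.exp (-t / m) / (m:ℝ) ^ 2 ≤
        ∑ m ∈ Finset.Icc 1 n, Real.exp (-t / m) / (m:ℝ) ^ 2 := by
      apply Finset.sum_le_sum_of_subset_of_nonneg
      · exact Finset.Icc_subset_Icc ha1 le_rfl
      · intro i _ _
        positivity
    have key : 3 / (10 * t) ≤ 1 / (a:ℝ) - 1 / ((n:ℝ) + 1) := by
      rw [div_sub_div _ _ (by positivity) (by positivity),
        div_le_div_iff₀ (by positivity) (by positivity)]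
      nlinarith [mul_nonneg (by linarith : (0:ℝ) ≤ t / 4 + 1 - a) (by linarith : (0:ℝ) ≤ (n:ℝ) + 1),
        mul_nonneg (by linarith : (0:ℝ) ≤ (n:ℝ) - t) (by linarith : (0:ℝ) ≤ t),
        mul_nonneg (by linarith : (0:ℝ) ≤ t - 1) (by linarith : (0:ℝ) ≤ (n:ℝ) - 1),
        mul_nonneg (by linarith : (0:ℝ) ≤ t / 4 + 1 - a) (by linarith : (0:ℝ) ≤ t)]
    calc 3 / 10 * Real.exp (-4) / t = Real.exp (-4) * (3 / (10 * t)) := by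
          field_simp
    _ ≤ Real.exp (-4) * (1 / (a:ℝ) - 1 / ((n:ℝ) + 1)) := by
          apply mul_le_mul_of_nonneg_left key (le_of_lt (Real.exp_pos _))
    _ ≤ _ := le_trans step3 step4
  · -- Upper bound
    set b : ℕ := ⌊t⌋₊ with hbb
    have hb1 : 1 ≤ b := by
      rw [hbb]
      exact Nat.le_floor (by exact_mod_cast ht1)
    have hbR1 : (1:ℝ) ≤ (b:ℝ) := by exact_mod_cast hb1
    have hbn : b ≤ n := by
      rw [hbb]
      exact Nat.floor_le_of_le htn
    have hbt : (b:ℝ) ≤ t := by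
      rw [hbb]; exact Nat.floor_le (by positivity)
    have htb : t ≤ 2 * b := by
      have := Nat.lt_floor_add_one t
      rw [← hbb] at this
      linarith
    have hsplit : ∑ m ∈ Finset.Icc 1 n, Real.exp (-t / m) / (m:ℝ) ^ 2 =
        ∑ m ∈ Finset.Ioc 0 b, Real.exp (-t / m) / (m:ℝ) ^ 2 +
        ∑ m ∈ Finset.Ioc b n, Real.exp (-t / m) / (m:ℝ) ^ 2 := by
      rw [Finset.sum_Ioc_consecutive _ (Nat.zero_le b) hbn]
      rw [← Finset.Icc_add_one_left_eq_Ioc]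
      rfl
    rw [hsplit]
    have part1 : ∑ m ∈ Finset.Ioc 0 b, Real.exp (-t / m) / (m:ℝ) ^ 2 ≤ 27 / t := by
      have hterm : ∀ m ∈ Finset.Ioc 0 b,
          Real.exp (-t / m) / (m:ℝ) ^ 2 ≤ 27 * b / t ^ 3 := by
        intro m hm
        rw [Finset.mem_Ioc] at hm
        have hm1 : 1 ≤ m := hm.1
        have hmR : (1:ℝ) ≤ (m:ℝ) := by exact_mod_cast hm1
        have hmb : (m:ℝ) ≤ (b:ℝ) := by exact_mod_cast hm.2
        have hexp : Real.exp (-t / m) ≤ 27 / (t / m) ^ 3 := by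
          rw [neg_div]
          exact aux_exp_neg_le (t / m) (by positivity)
        calc Real.exp (-t / m) / (m:ℝ) ^ 2 ≤ (27 / (t / m) ^ 3) / (m:ℝ) ^ 2 := by
              apply div_le_div_of_nonneg_right hexp (by positivity)
        _ = 27 * m / t ^ 3 := by
              rw [div_pow]
              field_simp
        _ ≤ 27 * b / t ^ 3 := by
              apply div_le_div_of_nonneg_right _ (by positivity)
              linarith
      calc ∑ m ∈ Finset.Ioc 0 b, Real.exp (-t / m) / (m:ℝ) ^ 2
          ≤ (Finset.Ioc 0 b).card • (27 * b / t ^ 3) :=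
            Finset.sum_le_card_nsmul _ _ _ hterm
      _ = (b:ℝ) * (27 * b / t ^ 3) := by
            rw [Nat.card_Ioc]
            simp [nsmul_eq_mul]
      _ ≤ 27 / t := by
            rw [show (b:ℝ) * (27 * b / t ^ 3) = (27 * b * b) / t ^ 3 by ring,
              div_le_div_iff₀ (by positivity) (by positivity)]
            nlinarith [mul_nonneg (by linarith : (0:ℝ) ≤ t - b) (by linarith : (0:ℝ) ≤ (b:ℝ)),
              mul_nonneg (by linarith : (0:ℝ) ≤ t - b) (by linarith : (0:ℝ) ≤ t)]
    have part2 : ∑ m ∈ Finset.Ioc b n, Real.exp (-t / m) / (m:ℝ) ^ 2 ≤ 2 / t := by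
      have hterm : ∀ m ∈ Finset.Ioc b n,
          Real.exp (-t / m) / (m:ℝ) ^ 2 ≤ 1 / (m:ℝ) ^ 2 := by
        intro m hm
        rw [Finset.mem_Ioc] at hm
        have hm1 : 1 ≤ m := hb1.trans (le_of_lt hm.1)
        have hmR : (1:ℝ) ≤ (m:ℝ) := by exact_mod_cast hm1
        apply div_le_div_of_nonneg_right _ (by positivity)
        apply Real.exp_le_one_iff.mpr
        rw [neg_div]
        simp only [neg_nonpos]
        positivity
      calc ∑ m ∈ Finset.Ioc b n, Real.exp (-t / m) / (m:ℝ) ^ 2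
          ≤ ∑ m ∈ Finset.Ioc b n, 1 / (m:ℝ) ^ 2 := Finset.sum_le_sum hterm
      _ ≤ 1 / (b:ℝ) - 1 / (n:ℝ) := aux_tele_upper b hb1 n hbn
      _ ≤ 1 / (b:ℝ) := by
            have : (0:ℝ) ≤ 1 / (n:ℝ) := by positivity
            linarith
      _ ≤ 2 / t := by
            rw [div_le_div_iff₀ (by positivity) (by positivity)]
            linarith
    calc _ ≤ 27 / t + 2 / t := add_le_add part1 part2
    _ = 29 / t := by ring
end

section
/- Let c > 0 and n a positive integer with 1 ≤ cn ≤ n. Then ∑_{m=1}^{n} e^{-cn/m}/m³ = O(1/(cn)²), i.e., there is an absolute constant C with ∑_{m=1}^{n} e^{-cn/m}/m³ ≤ C/(cn)². -/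
/-- For `c > 0` with `1 ≤ cn ≤ n`, `∑_{m=1}^n e^{-cn/m}/m³ = O(1/(cn)²)`
with an absolute implied constant. -/
theorem sum_exp_div_cube_bigO :
    ∃ C : ℝ, 0 < C ∧
      ∀ (c : ℝ) (n : ℕ), 0 < c → 1 ≤ c * n → c * n ≤ n →
        ∑ m ∈ Finset.Icc 1 n, Real.exp (-(c * n) / m) / (m : ℝ) ^ 3 ≤ C / (c * n) ^ 2 := by
  refine ⟨3, by norm_num, ?_⟩
  intro c n hc h1 _h2
  set X : ℝ := c * n with hX
  have hX0 : 0 < X := lt_of_lt_of_le one_pos h1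
  clear_value X
  -- telescoping bound
  have key : ∀ N : ℕ, ∑ m ∈ Finset.Icc 1 N, (6:ℝ) / ((m : ℝ) + X) ^ 3
      ≤ 3 / X ^ 2 - 3 / ((N : ℝ) + X) ^ 2 := by
    intro N
    induction N with
    | zero => simp
    | succ k ih =>
      rw [Finset.sum_Icc_succ_top (by omega)]
      have ha : (0:ℝ) < (k : ℝ) + X := by positivity
      have hb : (0:ℝ) < ((k : ℝ) + 1) + X := by positivity
      have step : (6:ℝ) / (((k+1 : ℕ) : ℝ) + X) ^ 3
          ≤ 3 / ((k : ℝ) + X) ^ 2 - 3 / (((k+1 : ℕ) : ℝ) + X) ^ 2 := by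
        push_cast
        rw [div_sub_div _ _ (by positivity) (by positivity), div_le_div_iff₀ (by positivity) (by positivity)]
        nlinarith [mul_pos ha hb, mul_pos (mul_pos ha ha) hb, sq_nonneg ((k:ℝ)+X)]
      calc _ ≤ (3 / X ^ 2 - 3 / ((k : ℝ) + X) ^ 2) + (6:ℝ) / (((k+1 : ℕ) : ℝ) + X) ^ 3 :=
              add_le_add ih le_rfl
        _ ≤ _ := by push_cast at step ⊢; linarith
  -- pointwise bound
  have pw : ∀ m ∈ Finset.Icc 1 n, Real.exp (-X / m) / (m : ℝ) ^ 3 ≤ 6 / ((m : ℝ) + X) ^ 3 := by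
    intro m hm
    have hm1 : 1 ≤ m := (Finset.mem_Icc.mp hm).1
    have hm0 : (0:ℝ) < (m : ℝ) := by exact_mod_cast Nat.pos_of_ne_zero (by omega)
    set t : ℝ := X / m with ht
    have ht0 : 0 ≤ t := by positivity
    have hcube : (1 + t) ^ 3 ≤ 6 * Real.exp t := by
      have := Real.sum_le_exp_of_nonneg ht0 4
      simp [Finset.sum_range_succ, Nat.factorial] at this
      nlinarith [pow_nonneg ht0 3, sq_nonneg t]
    have hexp : Real.exp (-t) ≤ 6 / (1 + t) ^ 3 := by
      have h' := mul_le_mul_of_nonneg_right hcube (Real.exp_nonneg (-t))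
      rw [mul_assoc, ← Real.exp_add, add_neg_cancel, Real.exp_zero, mul_one] at h'
      rw [le_div_iff₀ (by positivity), mul_comm]
      exact h'
    have hmul : (1 + t) * m = (m : ℝ) + X := by
      rw [ht, add_mul, one_mul, div_mul_cancel₀ _ hm0.ne']
    calc Real.exp (-X / m) / (m : ℝ) ^ 3 = Real.exp (-t) / (m : ℝ) ^ 3 := by
          rw [ht, neg_div]
      _ ≤ (6 / (1 + t) ^ 3) / (m : ℝ) ^ 3 := by
          gcongr
      _ = 6 / ((m : ℝ) + X) ^ 3 := by
          rw [div_div, ← mul_pow, hmul]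
  calc ∑ m ∈ Finset.Icc 1 n, Real.exp (-X / m) / (m : ℝ) ^ 3
      ≤ ∑ m ∈ Finset.Icc 1 n, 6 / ((m : ℝ) + X) ^ 3 := Finset.sum_le_sum pw
    _ ≤ 3 / X ^ 2 - 3 / ((n : ℝ) + X) ^ 2 := key n
    _ ≤ 3 / X ^ 2 := by
        have : 0 ≤ 3 / ((n : ℝ) + X) ^ 2 := by positivity
        linarith
end
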